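/- Let A be a finite nonempty set, X the simplex in ℝ^A, g a continuous map assigning to each x ∈ X a symmetric positive-definite matrix g(x), and v : X → ℝ^A continuous. For each x ∈ X let V(x) be the g(x)-projection of g(x)⁻¹ v(x) onto the tangent cone TC_X(x). Then the speed function x ↦ ‖V(x)‖_{g(x)} is lower semicontinuous on X; equivalently, it equals the maximum of ⟨g(x)⁻¹ v(x), z⟩_{g(x)} over all z ∈ TC_X(x) with ‖z‖_{g(x)} ≤ 1, and this maximum is lower semicontinuous in x. -/

import Mathlib

open Matrix

noncomputable section

/-- The tangent cone `TC_X(x)` of the simplex at `x`. -/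
def tcone {A : Type*} [Fintype A] (x : A → ℝ) : Set (A → ℝ) :=
  {z | (∑ α, z α) = 0 ∧ ∀ α, x α = 0 → 0 ≤ z α}

/-- The quadratic form `wᵀ G w = ‖w‖_G²` associated to a matrix `G`. -/
def qform {A : Type*} [Fintype A] (G : Matrix A A ℝ) (w : A → ℝ) : ℝ :=
  w ⬝ᵥ G.mulVec w

/-- `V` is the `G`-projection of `w` onto `C`. -/
def IsGProj {A : Type*} [Fintype A] (G : Matrix A A ℝ) (C : Set (A → ℝ))
    (w V : A → ℝ) : Prop :=
  V ∈ C ∧ ∀ z ∈ C, qform G (w - V) ≤ qform G (w - z)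

section aux

variable {A : Type*} [Fintype A]

lemma pd_symm {G : Matrix A A ℝ} (hG : G.PosDef) : Gᵀ = G := by
  ext i j
  have h := congrFun (congrFun hG.1 i) j
  simpa [Matrix.conjTranspose_apply] using h

lemma qform_nonneg {G : Matrix A A ℝ} (hG : G.PosDef) (w : A → ℝ) : 0 ≤ qform G w := by
  simpa [qform] using hG.posSemidef.dotProduct_mulVec_nonneg w

lemma dot_symm {G : Matrix A A ℝ} (hsym : Gᵀ = G) (a b : A → ℝ) :
    a ⬝ᵥ G *ᵥ b = b ⬝ᵥ G *ᵥ a := by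
  simp only [dotProduct, Matrix.mulVec, Finset.mul_sum]
  rw [Finset.sum_comm]
  refine Finset.sum_congr rfl fun j _ => Finset.sum_congr rfl fun i _ => ?_
  have h := congrFun (congrFun hsym j) i
  rw [Matrix.transpose_apply] at h
  rw [h]; ring

lemma qform_sub {G : Matrix A A ℝ} (hsym : Gᵀ = G) (a b : A → ℝ) :
    qform G (a - b) = qform G a - 2 * (a ⬝ᵥ G *ᵥ b) + qform G b := by
  simp only [qform, mulVec_sub, dotProduct_sub, sub_dotProduct]
  rw [dot_symm hsym b a]
  ring

lemma qform_smul {G : Matrix A A ℝ} (t : ℝ) (u : A → ℝ) :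
    qform G (t • u) = t ^ 2 * qform G u := by
  simp only [qform, mulVec_smul, dotProduct_smul, smul_dotProduct, smul_eq_mul]
  ring

lemma cs {G : Matrix A A ℝ} (hG : G.PosDef) (u z : A → ℝ) :
    (u ⬝ᵥ G *ᵥ z) ^ 2 ≤ qform G u * qform G z := by
  have key : ∀ t : ℝ, 0 ≤ qform G z * (t * t) + (2 * (u ⬝ᵥ G *ᵥ z)) * t + qform G u := by
    intro t
    have h := qform_nonneg hG (u + t • z)
    have hexp : qform G (u + t • z)
        = qform G z * (t * t) + (2 * (u ⬝ᵥ G *ᵥ z)) * t + qform G u := by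
      simp only [qform, mulVec_add, dotProduct_add, add_dotProduct, mulVec_smul,
        dotProduct_smul, smul_dotProduct, smul_eq_mul]
      rw [dot_symm (pd_symm hG) z u]
      ring
    linarith [hexp ▸ h]
  have hd := discrim_le_zero (a := qform G z) (b := 2 * (u ⬝ᵥ G *ᵥ z)) (c := qform G u) key
  rw [discrim] at hd
  nlinarith [hd]

lemma zero_mem_tcone (x : A → ℝ) : (0 : A → ℝ) ∈ tcone x :=
  ⟨by simp, fun α _ => le_refl 0⟩

lemma smul_mem_tcone {x z : A → ℝ} (t : ℝ) (ht : 0 ≤ t) (hz : z ∈ tcone x) :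
    t • z ∈ tcone x := by
  refine ⟨?_, fun α hα => ?_⟩
  · simp only [Pi.smul_apply, smul_eq_mul, ← Finset.mul_sum, hz.1, mul_zero]
  · exact mul_nonneg ht (hz.2 α hα)

lemma comb_mem_tcone {x V z : A → ℝ} (hV : V ∈ tcone x) (hz : z ∈ tcone x)
    {t : ℝ} (ht0 : 0 ≤ t) (ht1 : t ≤ 1) : V + t • (z - V) ∈ tcone x := by
  refine ⟨?_, fun α hα => ?_⟩
  · simp only [Pi.add_apply, Pi.smul_apply, Pi.sub_apply, smul_eq_mul]
    rw [Finset.sum_add_distrib, ← Finset.mul_sum, Finset.sum_sub_distrib, hV.1, hz.1]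
    ring
  · have h1 := hV.2 α hα
    have h2 := hz.2 α hα
    simp only [Pi.add_apply, Pi.smul_apply, Pi.sub_apply, smul_eq_mul]
    nlinarith

lemma qform_sub_smul {G : Matrix A A ℝ} (hsym : Gᵀ = G) (a u : A → ℝ) (t : ℝ) :
    qform G (a - t • u) = qform G a - 2 * t * (a ⬝ᵥ G *ᵥ u) + t ^ 2 * qform G u := by
  rw [qform_sub hsym a (t • u), qform_smul, mulVec_smul, dotProduct_smul, smul_eq_mul]
  ring

lemma varineq {x : A → ℝ} {G : Matrix A A ℝ} (hG : G.PosDef) {w V' : A → ℝ}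
    (hP : IsGProj G (tcone x) w V') :
    ∀ z ∈ tcone x, (w - V') ⬝ᵥ G *ᵥ (z - V') ≤ 0 := by
  intro z hz
  by_contra hpos
  push_neg at hpos
  have hq : 0 ≤ qform G (z - V') := qform_nonneg hG _
  have key : ∀ t : ℝ, 0 < t → t ≤ 1 →
      2 * t * ((w - V') ⬝ᵥ G *ᵥ (z - V')) ≤ t ^ 2 * qform G (z - V') := by
    intro t ht0 ht1
    have hmem := comb_mem_tcone hP.1 hz ht0.le ht1
    have h2 := hP.2 _ hmem
    have hrw : w - (V' + t • (z - V')) = w - V' - t • (z - V') := by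
      ext α; simp; ring
    rw [hrw, qform_sub_smul (pd_symm hG)] at h2
    linarith
  set s := (w - V') ⬝ᵥ G *ᵥ (z - V') with hs
  set q := qform G (z - V') with hqdef
  set t := min 1 (s / (q + 1)) with htdef
  have ht0 : 0 < t := lt_min one_pos (div_pos hpos (by linarith))
  have ht1 : t ≤ 1 := min_le_left _ _
  have hkey := key t ht0 ht1
  have h3 : t * (q + 1) ≤ s := by
    have hmr : t ≤ s / (q + 1) := min_le_right _ _
    have := mul_le_mul_of_nonneg_right hmr (by linarith : (0:ℝ) ≤ q + 1)
    rwa [div_mul_cancel₀ s (by linarith : (q + 1 : ℝ) ≠ 0)] at this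
  nlinarith [mul_le_mul_of_nonneg_left h3 ht0.le, mul_pos ht0 hpos]

lemma proj_facts {x : A → ℝ} {G : Matrix A A ℝ} (hG : G.PosDef) {w V' : A → ℝ}
    (hP : IsGProj G (tcone x) w V') :
    (w ⬝ᵥ G *ᵥ V' = qform G V') ∧
      ∀ z ∈ tcone x, w ⬝ᵥ G *ᵥ z ≤ Real.sqrt (qform G V') * Real.sqrt (qform G z) := by
  have horth : (w - V') ⬝ᵥ G *ᵥ V' = 0 := by
    have e0 := varineq hG hP 0 (zero_mem_tcone x)
    rw [zero_sub, mulVec_neg, dotProduct_neg] at e0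
    have e2 := varineq hG hP ((2 : ℝ) • V') (smul_mem_tcone 2 (by norm_num) hP.1)
    have h2V : (2 : ℝ) • V' - V' = V' := by ext α; simp; ring
    rw [h2V] at e2
    linarith
  constructor
  · have := horth
    rw [sub_dotProduct] at this
    have : w ⬝ᵥ G *ᵥ V' = V' ⬝ᵥ G *ᵥ V' := by linarith
    simpa [qform] using this
  · intro z hz
    have h1 := varineq hG hP z hz
    rw [mulVec_sub, dotProduct_sub, horth] at h1
    have h2 : w ⬝ᵥ G *ᵥ z = (w - V') ⬝ᵥ G *ᵥ z + V' ⬝ᵥ G *ᵥ z := by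
      rw [sub_dotProduct]; ring
    have h3 : V' ⬝ᵥ G *ᵥ z ≤ Real.sqrt (qform G V') * Real.sqrt (qform G z) := by
      have hcs := cs hG V' z
      calc V' ⬝ᵥ G *ᵥ z ≤ |V' ⬝ᵥ G *ᵥ z| := le_abs_self _
        _ = Real.sqrt ((V' ⬝ᵥ G *ᵥ z) ^ 2) := (Real.sqrt_sq_eq_abs _).symm
        _ ≤ Real.sqrt (qform G V' * qform G z) := Real.sqrt_le_sqrt hcs
        _ = Real.sqrt (qform G V') * Real.sqrt (qform G z) :=
            Real.sqrt_mul (qform_nonneg hG _) _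
    linarith

lemma inv_dot [DecidableEq A] {G : Matrix A A ℝ} (hG : G.PosDef) (u z : A → ℝ) :
    u ⬝ᵥ z = (G⁻¹ *ᵥ u) ⬝ᵥ G *ᵥ z := by
  have hGu : G *ᵥ (G⁻¹ *ᵥ u) = u := by
    rw [mulVec_mulVec, Matrix.mul_nonsing_inv _ (isUnit_iff_ne_zero.mpr hG.det_pos.ne'),
      one_mulVec]
  calc u ⬝ᵥ z = (G *ᵥ (G⁻¹ *ᵥ u)) ⬝ᵥ z := by rw [hGu]
    _ = z ⬝ᵥ (G *ᵥ (G⁻¹ *ᵥ u)) := dotProduct_comm _ _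
    _ = (G⁻¹ *ᵥ u) ⬝ᵥ G *ᵥ z := dot_symm (pd_symm hG) z _

lemma cont_qform (z : A → ℝ) : Continuous fun M : Matrix A A ℝ => qform M z := by
  simp only [qform, Matrix.mulVec, dotProduct]
  apply continuous_finset_sum
  intro i _
  exact continuous_const.mul (continuous_finset_sum _ fun j _ =>
    ((continuous_id.matrix_elem i j)).mul continuous_const)

lemma cont_dot (z : A → ℝ) : Continuous fun u : A → ℝ => u ⬝ᵥ z := by
  simp only [dotProduct]
  exact continuous_finset_sum _ fun i _ => (continuous_apply i).mul continuous_const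

end aux

/-- with `g` a continuous field of symmetric positive-definite matrices on the
simplex, `v` continuous, and `V(x)` the `g(x)`-projection of `g(x)⁻¹ v(x)` onto the tangent
cone `TC_X(x)`, the speed function `x ↦ ‖V(x)‖_{g(x)}` is lower semicontinuous on the simplex. -/
theorem stmt_1 {A : Type*} [Fintype A] [DecidableEq A] [Nonempty A]
    (g : (A → ℝ) → Matrix A A ℝ) (hgcont : ContinuousOn g (stdSimplex ℝ A))
    (hgpd : ∀ x ∈ stdSimplex ℝ A, (g x).PosDef)
    (v : (A → ℝ) → (A → ℝ)) (hvcont : ContinuousOn v (stdSimplex ℝ A))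
    (V : (A → ℝ) → (A → ℝ))
    (hV : ∀ x ∈ stdSimplex ℝ A, IsGProj (g x) (tcone x) ((g x)⁻¹.mulVec (v x)) (V x)) :
    LowerSemicontinuousOn (fun x => Real.sqrt (qform (g x) (V x))) (stdSimplex ℝ A) := by
  intro x hx c hc
  rcases lt_or_ge c 0 with hc0 | hc0
  · exact Filter.Eventually.of_forall fun y => lt_of_lt_of_le hc0 (Real.sqrt_nonneg _)
  have hS : 0 < Real.sqrt (qform (g x) (V x)) := lt_of_le_of_lt hc0 hc
  have hq₀pos : 0 < qform (g x) (V x) := Real.sqrt_pos.mp hS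
  obtain ⟨horth, -⟩ := proj_facts (hgpd x hx) (hV x hx)
  have heq : v x ⬝ᵥ V x = qform (g x) (V x) := by
    rw [inv_dot (hgpd x hx)]; exact horth
  -- continuity facts
  have hqcont : ContinuousWithinAt (fun y => qform (g y) (V x)) (stdSimplex ℝ A) x :=
    ((cont_qform (V x)).comp_continuousOn hgcont) x hx
  have hvcont' : ContinuousWithinAt (fun y => v y ⬝ᵥ V x) (stdSimplex ℝ A) x :=
    ((cont_dot (V x)).comp_continuousOn hvcont) x hx
  have hφ : ContinuousWithinAt
      (fun y => (v y ⬝ᵥ V x) / Real.sqrt (qform (g y) (V x))) (stdSimplex ℝ A) x :=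
    hvcont'.div (Real.continuous_sqrt.continuousAt.comp_continuousWithinAt hqcont) hS.ne'
  have hval : (v x ⬝ᵥ V x) / Real.sqrt (qform (g x) (V x))
      = Real.sqrt (qform (g x) (V x)) := by
    rw [heq, div_eq_iff hS.ne']
    exact (Real.mul_self_sqrt hq₀pos.le).symm
  have hφx : c < (v x ⬝ᵥ V x) / Real.sqrt (qform (g x) (V x)) := by
    rw [hval]; exact hc
  have hev1 := hφ.eventually (eventually_gt_nhds hφx)
  have hev2 := hqcont.eventually (eventually_gt_nhds hq₀pos)
  have hev3 : ∀ᶠ y in nhds x, ∀ α, 0 < x α → 0 < y α := by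
    rw [Filter.eventually_all]
    intro α
    rcases lt_or_ge 0 (x α) with h | h
    · exact ((continuous_apply α).continuousAt.eventually (eventually_gt_nhds h)).mono
        fun y hy _ => hy
    · exact Filter.Eventually.of_forall fun y hy => absurd hy (not_lt.mpr h)
  filter_upwards [hev1, hev2, hev3.filter_mono nhdsWithin_le_nhds, self_mem_nhdsWithin]
    with y h1 h2 h3 hy
  have hz₀y : V x ∈ tcone y := by
    refine ⟨(hV x hx).1.1, fun α hα => ?_⟩
    have hxα : x α = 0 := by
      by_contra hne
      have hpos : 0 < x α := lt_of_le_of_ne (hx.1 α) (Ne.symm hne)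
      have := h3 α hpos
      rw [hα] at this
      exact lt_irrefl 0 this
    exact (hV x hx).1.2 α hxα
  obtain ⟨-, hbd⟩ := proj_facts (hgpd y hy) (hV y hy)
  have hineq : v y ⬝ᵥ V x
      ≤ Real.sqrt (qform (g y) (V y)) * Real.sqrt (qform (g y) (V x)) := by
    rw [inv_dot (hgpd y hy)]
    exact hbd (V x) hz₀y
  have hs2 : 0 < Real.sqrt (qform (g y) (V x)) := Real.sqrt_pos.mpr h2
  calc c < (v y ⬝ᵥ V x) / Real.sqrt (qform (g y) (V x)) := h1
    _ ≤ Real.sqrt (qform (g y) (V y)) := (div_le_iff₀ hs2).mpr hineq
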